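/- With f(x,y) = y^4(x-1)^4 + 8x(x^2+1), the iterated resultants defined by R^{(1)}(x,x_1) = f(x,x_1) and R^{(k)}(x,x_k) = Res_{x_{k-1}}(R^{(k-1)}(x,x_{k-1}), f(x_{k-1},x_k)) satisfy R^{(n)}(x,x_n) ≡ x_n^{4^n}(x+1)^{4^n} (mod 2) for all n ≥ 1; in particular R_n(x) := R^{(n)}(x,x) ≡ x^{4^n}(x+1)^{4^n} (mod 2). -/

import Mathlib

open Polynomial

/-- The Sylvester matrix of `p` and `q`, regarded as polynomials of degrees `m`
and `n` respectively: the first `n` rows are shifted copies of the coefficients of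
`p`, the remaining `m` rows are shifted copies of the coefficients of `q`. -/
def sylvesterMatrix {R : Type*} [CommRing R] (p q : Polynomial R) (m n : ℕ) :
    Matrix (Fin (m + n)) (Fin (m + n)) R :=
  Matrix.of fun i j =>
    if (i : ℕ) < n then
      (if (i : ℕ) ≤ (j : ℕ) ∧ (j : ℕ) ≤ m + (i : ℕ) then p.coeff (m + (i : ℕ) - j) else 0)
    else
      (if (i : ℕ) - n ≤ (j : ℕ) ∧ (j : ℕ) ≤ n + ((i : ℕ) - n) then
        q.coeff (n + ((i : ℕ) - n) - j) else 0)

/-- The resultant of two polynomials, as the determinant of their Sylvester matrix. -/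
noncomputable def resultant {R : Type*} [CommRing R] (p q : Polynomial R) : R :=
  (sylvesterMatrix p q p.natDegree q.natDegree).det

/-- `f(x, x₁) = x₁^4 (x-1)^4 + 8x(x²+1)` as a polynomial in `x₁` (outer variable)
over `ℤ[x]`.  This is `R⁽¹⁾(x, x₁)`. -/
noncomputable def fIter : Polynomial (Polynomial ℤ) :=
  X ^ 4 * C ((X - 1) ^ 4) + C (8 * X * (X ^ 2 + 1))

/-- `f(x_{k-1}, x_k)` viewed as a polynomial in the resultant variable `x_{k-1}`
(outer variable) with coefficients in `ℤ[x][x_k]`. -/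
noncomputable def fRes : Polynomial (Polynomial (Polynomial ℤ)) :=
  C ((X : Polynomial (Polynomial ℤ)) ^ 4) * (X - 1) ^ 4 + 8 * X * (X ^ 2 + 1)

/-- The iterated resultants: `RIter 0 = R⁽¹⁾(x, x₁) = f(x, x₁)`, and
`RIter k = R⁽ᵏ⁺¹⁾(x, x_{k+1}) = Res_{x_k}(R⁽ᵏ⁾(x, x_k), f(x_k, x_{k+1}))`.
`RIter (n-1)` is a polynomial in `x_n` (outer variable) over `ℤ[x]`. -/
noncomputable def RIter : ℕ → Polynomial (Polynomial ℤ)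
  | 0 => fIter
  | k + 1 => _root_.resultant ((RIter k).map (C : Polynomial ℤ →+* Polynomial (Polynomial ℤ))) fRes

/-! ### Auxiliary lemmas -/

lemma sylvesterMatrix_map {R S : Type*} [CommRing R] [CommRing S] (φ : R →+* S)
    (p q : Polynomial R) (m n : ℕ) :
    (sylvesterMatrix p q m n).map φ = sylvesterMatrix (p.map φ) (q.map φ) m n := by
  ext i j
  simp only [sylvesterMatrix, Matrix.map_apply, Matrix.of_apply]
  split_ifs <;> simp [coeff_map]

lemma resultant_map {R S : Type*} [CommRing R] [CommRing S] (φ : R →+* S) (p q : Polynomial R)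
    (hp : (p.map φ).natDegree = p.natDegree) (hq : (q.map φ).natDegree = q.natDegree) :
    φ (_root_.resultant p q) = _root_.resultant (p.map φ) (q.map φ) := by
  unfold _root_.resultant
  rw [hp, hq, RingHom.map_det, RingHom.mapMatrix_apply, sylvesterMatrix_map]

lemma det_sylvester_special {R : Type*} [CommRing R] (a b : R) (m n : ℕ) (hn : 0 < n) :
    (sylvesterMatrix (C a * X ^ m) (C b * X ^ n + C b) m n).det = a ^ n * b ^ m := by
  have hdiag : ∀ i : Fin (m + n),
      sylvesterMatrix (C a * X ^ m) (C b * X ^ n + C b) m n i i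
        = if (i : ℕ) < n then a else b := by
    intro i
    simp only [sylvesterMatrix, Matrix.of_apply, coeff_add, coeff_C_mul, coeff_X_pow, coeff_C]
    split_ifs <;> simp_all <;> omega
  have htri : (sylvesterMatrix (C a * X ^ m) (C b * X ^ n + C b) m n).BlockTriangular
      OrderDual.toDual := by
    intro i j hij
    simp only [OrderDual.toDual_lt_toDual] at hij
    have hij' : (i : ℕ) < (j : ℕ) := hij
    simp only [sylvesterMatrix, Matrix.of_apply, coeff_add, coeff_C_mul, coeff_X_pow, coeff_C]
    split_ifs <;> first | rfl | omega | (exfalso; omega) | simp_all <;> omega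
  rw [Matrix.det_of_lowerTriangular _ htri]
  rw [Finset.prod_congr rfl fun i _ => hdiag i]
  rw [Fin.prod_univ_eq_prod_range (fun k => if k < n then a else b)]
  rw [Finset.prod_ite]
  have h1 : (Finset.range (m + n)).filter (fun k => k < n) = Finset.range n := by
    ext k; simp; omega
  have h2 : ((Finset.range (m + n)).filter (fun k => ¬ k < n)).card = m := by
    have h3 := Finset.card_filter_add_card_filter_not (s := Finset.range (m + n))
      (p := fun k => k < n)
    rw [h1, Finset.card_range, Finset.card_range] at h3
    omega
  rw [Finset.prod_const, Finset.prod_const, h1, Finset.card_range, h2]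

lemma natDegree_special {R : Type*} [CommRing R] [Nontrivial R] (b : R) (n : ℕ)
    (hn : 0 < n) (hb : b ≠ 0) : (C b * X ^ n + C b).natDegree = n := by
  rw [natDegree_add_eq_left_of_natDegree_lt, natDegree_C_mul_X_pow n b hb]
  rw [natDegree_C_mul_X_pow n b hb, natDegree_C]
  exact hn

lemma resultant_special {R : Type*} [CommRing R] [IsDomain R] (a b : R) (m n : ℕ)
    (hn : 0 < n) (ha : a ≠ 0) (hb : b ≠ 0) :
    _root_.resultant (C a * X ^ m) (C b * X ^ n + C b) = a ^ n * b ^ m := by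
  have h1 : (C a * X ^ m).natDegree = m := natDegree_C_mul_X_pow m a ha
  have h2 : (C b * X ^ n + C b).natDegree = n := natDegree_special b n hn hb
  unfold _root_.resultant
  rw [h1, h2, det_sylvester_special a b m n hn]

lemma natDegree_det_le' {A : Type*} [CommRing A] {N : ℕ}
    (M : Matrix (Fin N) (Fin N) (Polynomial A)) (f : Fin N → ℕ)
    (h : ∀ i j, (M i j).natDegree ≤ f i) :
    M.det.natDegree ≤ ∑ i, f i := by
  rw [Matrix.det_apply']
  refine natDegree_sum_le_of_forall_le _ _ ?_
  intro σ _
  refine le_trans (natDegree_mul_le) ?_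
  rw [show ((Equiv.Perm.sign σ : ℤ) : Polynomial A) = C ((Equiv.Perm.sign σ : ℤ) : A) by
    push_cast; simp]
  rw [natDegree_C, zero_add]
  refine le_trans (natDegree_prod_le _ _) ?_
  calc ∑ i, ((M (σ i) i).natDegree) ≤ ∑ i, f (σ i) := Finset.sum_le_sum fun i _ => h (σ i) i
    _ = ∑ i, f i := Equiv.sum_comp σ f

lemma sum_ite_lt (m n c : ℕ) :
    (∑ i : Fin (m + n), if (i : ℕ) < n then 0 else c) = c * m := by
  rw [Fin.sum_univ_eq_sum_range (fun k => if k < n then 0 else c)]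
  rw [Finset.sum_ite, Finset.sum_const, Finset.sum_const, smul_zero, zero_add]
  have h1 : (Finset.range (m + n)).filter (fun k => k < n) = Finset.range n := by
    ext k; simp; omega
  have h3 := Finset.card_filter_add_card_filter_not (s := Finset.range (m + n))
    (p := fun k => k < n)
  rw [h1, Finset.card_range, Finset.card_range] at h3
  have h4 : ((Finset.range (m + n)).filter (fun k => ¬ k < n)).card = m := by omega
  rw [h4, smul_eq_mul, mul_comm]

/-! ### Char-2 facts -/

lemma two_eq_zero' : (2 : (ZMod 2)[X]) = 0 := by
  rw [show ((2 : (ZMod 2)[X])) = C 2 from (map_ofNat C 2).symm, show (2 : ZMod 2) = 0 from rfl,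
    map_zero]

lemma L1 : ((X : (ZMod 2)[X]) + 1) ^ 4 = X ^ 4 + 1 := by
  linear_combination (2 * X ^ 3 + 3 * X ^ 2 + 2 * X) * two_eq_zero'

lemma L1' : ((X : (ZMod 2)[X]) - 1) = X + 1 := by
  rw [sub_eq_add_neg, show (-1 : (ZMod 2)[X]) = 1 by
    rw [neg_eq_iff_add_eq_zero, one_add_one_eq_two]; exact two_eq_zero']

lemma L8 : (8 : (ZMod 2)[X]) = 0 := by
  linear_combination 4 * two_eq_zero'

lemma add_one_pow_four {T : Type*} [CommRing T] [Algebra (ZMod 2) T] (t : T) :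
    (t + 1) ^ 4 = t ^ 4 + 1 := by
  have := congrArg (aeval t : (ZMod 2)[X] →ₐ[ZMod 2] T) L1
  simpa using this

lemma sub_one_eq_add_one {T : Type*} [CommRing T] [Algebra (ZMod 2) T] (t : T) :
    t - 1 = t + 1 := by
  have := congrArg (aeval t : (ZMod 2)[X] →ₐ[ZMod 2] T) L1'
  simpa using this

lemma eight_eq_zero {T : Type*} [CommRing T] [Algebra (ZMod 2) T] : (8 : T) = 0 := by
  have := congrArg (aeval (0 : T) : (ZMod 2)[X] →ₐ[ZMod 2] T) L8
  simpa [map_ofNat] using this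

/-! ### Facts about `fIter` and `fRes` -/

lemma fIter_mod2 : fIter.map (mapRingHom (Int.castRingHom (ZMod 2))) =
    X ^ 4 * C (((X : (ZMod 2)[X]) + 1) ^ 4) := by
  unfold fIter
  rw [Polynomial.map_add, Polynomial.map_mul, Polynomial.map_pow, map_X, map_C, map_C]
  have h8 : mapRingHom (Int.castRingHom (ZMod 2)) (8 * X * (X ^ 2 + 1)) = 0 := by
    simp only [coe_mapRingHom, Polynomial.map_mul, Polynomial.map_add, Polynomial.map_pow,
      map_X, Polynomial.map_ofNat]
    rw [L8, zero_mul, zero_mul]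
  have hx : mapRingHom (Int.castRingHom (ZMod 2)) ((X - 1) ^ 4) = ((X : (ZMod 2)[X]) + 1) ^ 4 := by
    simp only [coe_mapRingHom, Polynomial.map_pow, Polynomial.map_sub, map_X, Polynomial.map_one]
    rw [L1']
  rw [h8, hx, map_zero, add_zero]

lemma natDegree_fIter : fIter.natDegree = 4 := by
  have hle : fIter.natDegree ≤ 4 := by
    unfold fIter
    refine le_trans (natDegree_add_le _ _) ?_
    simp only [natDegree_C, max_le_iff]
    refine ⟨le_trans natDegree_mul_le ?_, by omega⟩
    rw [natDegree_X_pow, natDegree_C]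
  have hge : 4 ≤ fIter.natDegree := by
    have h := fIter_mod2
    have h2 : (fIter.map (mapRingHom (Int.castRingHom (ZMod 2)))).natDegree = 4 := by
      rw [h, mul_comm, natDegree_C_mul_X_pow]
      exact pow_ne_zero _ (by
        intro hc
        have := congrArg (fun p => coeff p 0) hc
        simp at this)
    calc 4 = (fIter.map (mapRingHom (Int.castRingHom (ZMod 2)))).natDegree := h2.symm
      _ ≤ fIter.natDegree := natDegree_map_le
  omega

lemma fRes_mod2 : fRes.map (mapRingHom (mapRingHom (Int.castRingHom (ZMod 2)))) =
    C ((X : Polynomial (Polynomial (ZMod 2))) ^ 4) * X ^ 4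
      + C ((X : Polynomial (Polynomial (ZMod 2))) ^ 4) := by
  unfold fRes
  simp only [Polynomial.map_add, Polynomial.map_mul, Polynomial.map_pow, Polynomial.map_sub,
    Polynomial.map_one, map_X, map_C, Polynomial.map_ofNat, map_pow, coe_mapRingHom]
  rw [show ((8 : Polynomial (Polynomial (Polynomial (ZMod 2))))) = 0 by exact eight_eq_zero (T := Polynomial (Polynomial (Polynomial (ZMod 2)))),
    zero_mul, zero_mul, add_zero,
    sub_one_eq_add_one (X : Polynomial (Polynomial (Polynomial (ZMod 2)))),
    add_one_pow_four (X : Polynomial (Polynomial (Polynomial (ZMod 2)))), mul_add, mul_one]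

lemma natDegree_fRes : fRes.natDegree = 4 := by
  have hle : fRes.natDegree ≤ 4 := by
    unfold fRes
    refine le_trans (natDegree_add_le _ _) ?_
    simp only [max_le_iff]
    constructor
    · refine le_trans natDegree_mul_le ?_
      have : ((X - 1 : Polynomial (Polynomial (Polynomial ℤ))) ^ 4).natDegree ≤ 4 := by
        refine le_trans (natDegree_pow_le) ?_
        have : (X - 1 : Polynomial (Polynomial (Polynomial ℤ))).natDegree ≤ 1 := by
          refine le_trans (natDegree_sub_le _ _) ?_
          simp
        omega
      simp only [natDegree_C, zero_add]
      exact this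
    · have b1 : ((8 * X : Polynomial (Polynomial (Polynomial ℤ)))).natDegree ≤ 1 :=
        le_trans natDegree_mul_le (by simp)
      have b2 : ((X ^ 2 + 1 : Polynomial (Polynomial (Polynomial ℤ)))).natDegree ≤ 2 :=
        le_trans (natDegree_add_le _ _) (by simp [natDegree_X_pow])
      exact le_trans natDegree_mul_le (by omega)
  have hge : 4 ≤ fRes.natDegree := by
    have h2 : (fRes.map (mapRingHom (mapRingHom (Int.castRingHom (ZMod 2))))).natDegree = 4 := by
      rw [fRes_mod2, natDegree_special _ 4 (by norm_num)]
      exact pow_ne_zero _ X_ne_zero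
    calc 4 = _ := h2.symm
      _ ≤ fRes.natDegree := natDegree_map_le
  omega

lemma natDegree_fRes_coeff (k : ℕ) : (fRes.coeff k).natDegree ≤ 4 := by
  have hrw : fRes = C ((X : Polynomial (Polynomial ℤ)) ^ 4) *
      (((X - 1) ^ 4 : Polynomial ℤ).map (Int.castRingHom (Polynomial (Polynomial ℤ)))) +
      ((8 * X * (X ^ 2 + 1) : Polynomial ℤ).map
        (Int.castRingHom (Polynomial (Polynomial ℤ)))) := by
    unfold fRes
    simp only [Polynomial.map_pow, Polynomial.map_sub, Polynomial.map_mul, Polynomial.map_add,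
      Polynomial.map_one, map_X, Polynomial.map_ofNat]
  rw [hrw, coeff_add, coeff_C_mul, coeff_map, coeff_map]
  refine le_trans (natDegree_add_le _ _) ?_
  simp only [max_le_iff]
  constructor
  · refine le_trans natDegree_mul_le ?_
    rw [natDegree_X_pow, eq_intCast, natDegree_intCast]
  · rw [eq_intCast, natDegree_intCast]; omega

/-! ### The main induction -/

lemma RIter_key : ∀ k : ℕ,
    (RIter k).map (mapRingHom (Int.castRingHom (ZMod 2))) =
      X ^ 4 ^ (k + 1) * C (((X : (ZMod 2)[X]) + 1) ^ 4 ^ (k + 1)) ∧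
    (RIter k).natDegree = 4 ^ (k + 1) := by
  intro k
  induction k with
  | zero =>
    constructor
    · show fIter.map _ = _
      rw [fIter_mod2]; norm_num
    · show fIter.natDegree = _
      rw [natDegree_fIter]; norm_num
  | succ k ih =>
    obtain ⟨ihmap, ihdeg⟩ := ih
    set N : ℕ := 4 ^ (k + 1) with hN
    have hNpos : 0 < N := pow_pos (by norm_num) _
    set c : (ZMod 2)[X] := ((X : (ZMod 2)[X]) + 1) ^ N with hc
    have hcne : c ≠ 0 := pow_ne_zero _ (by
      intro hh
      have := congrArg (fun p => coeff p 0) hh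
      simp at this)
    set φ₁ : Polynomial ℤ →+* Polynomial (ZMod 2) := mapRingHom (Int.castRingHom (ZMod 2))
      with hφ₁
    set Ψ : Polynomial (Polynomial ℤ) →+* Polynomial (Polynomial (ZMod 2)) := mapRingHom φ₁
      with hΨ
    set P : Polynomial (Polynomial (Polynomial ℤ)) :=
      (RIter k).map (C : Polynomial ℤ →+* Polynomial (Polynomial ℤ)) with hP
    -- degree of P
    have hPdeg : P.natDegree = N := by
      rw [hP, natDegree_map_eq_of_injective (C_injective), ihdeg]
    -- image of P
    have hPmap : P.map Ψ = C (C c) * X ^ N := by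
      rw [hP, Polynomial.map_map]
      have hcomp : Ψ.comp (C : Polynomial ℤ →+* Polynomial (Polynomial ℤ)) =
          (C : Polynomial (ZMod 2) →+* Polynomial (Polynomial (ZMod 2))).comp φ₁ := by
        refine Polynomial.ringHom_ext (fun a => ?_) ?_ <;>
          simp [hΨ, Polynomial.map_C, Polynomial.map_X]
      rw [hcomp, ← Polynomial.map_map, ihmap]
      rw [Polynomial.map_mul, Polynomial.map_pow, map_X, map_C]
      exact mul_comm ((X : Polynomial (Polynomial (Polynomial (ZMod 2)))) ^ N) (C (C c))
    have hPmapdeg : (P.map Ψ).natDegree = N := by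
      rw [hPmap, natDegree_C_mul_X_pow N _ (by simpa using hcne)]
    -- image and degrees of fRes
    have hQmap : fRes.map Ψ = C ((X : Polynomial (Polynomial (ZMod 2))) ^ 4) * X ^ 4
        + C ((X : Polynomial (Polynomial (ZMod 2))) ^ 4) := fRes_mod2
    have hQmapdeg : (fRes.map Ψ).natDegree = 4 := by
      rw [hQmap, natDegree_special _ 4 (by norm_num) (pow_ne_zero _ X_ne_zero)]
    -- the resultant computation mod 2
    have hmain : (RIter (k + 1)).map φ₁ = X ^ 4 ^ (k + 2) * C (((X : (ZMod 2)[X]) + 1) ^ 4 ^ (k + 2)) := by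
      have h0 : (RIter (k + 1)).map φ₁ = Ψ (_root_.resultant P fRes) := by
        show _ = (_root_.resultant P fRes).map φ₁
        rfl
      rw [h0, resultant_map Ψ P fRes (by rw [hPmapdeg, hPdeg]) (by rw [hQmapdeg, natDegree_fRes]),
        hPmap, hQmap,
        resultant_special (C c) ((X : Polynomial (Polynomial (ZMod 2))) ^ 4) N 4 (by norm_num)
          (by simpa using hcne) (pow_ne_zero _ X_ne_zero)]
      rw [← map_pow, ← pow_mul]
      have e1 : N * 4 = 4 ^ (k + 2) := by rw [hN]; ring
      have e2 : ((X : Polynomial (Polynomial (ZMod 2))) ^ 4) ^ N = X ^ (4 ^ (k + 2)) := by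
        rw [← pow_mul]
        congr 1
        rw [hN]; ring
      rw [e1, e2]
      exact mul_comm _ _
    constructor
    · exact hmain
    · -- degree of RIter (k+1)
      have hle : (RIter (k + 1)).natDegree ≤ 4 ^ (k + 2) := by
        show (_root_.resultant P fRes).natDegree ≤ _
        unfold _root_.resultant
        rw [hPdeg, natDegree_fRes]
        refine le_trans (natDegree_det_le' _ (fun i => if (i : ℕ) < 4 then 0 else 4) ?_) ?_
        · intro i j
          simp only [sylvesterMatrix, Matrix.of_apply]
          split_ifs
          all_goals first
            | exact natDegree_fRes_coeff _
            | (rw [hP, coeff_map]; simp)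
            | simp
        · rw [sum_ite_lt N 4 4]
          exact le_of_eq (by rw [hN]; ring)
      have hge : 4 ^ (k + 2) ≤ (RIter (k + 1)).natDegree := by
        have h2 : ((RIter (k + 1)).map φ₁).natDegree = 4 ^ (k + 2) := by
          rw [hmain, mul_comm, natDegree_C_mul_X_pow _ _ (pow_ne_zero _ (by
            intro hh
            have := congrArg (fun p => coeff p 0) hh
            simp at this))]
        calc 4 ^ (k + 2) = _ := h2.symm
          _ ≤ _ := natDegree_map_le
      exact le_antisymm hle hge

theorem stmt_12 (n : ℕ) (hn : 1 ≤ n) :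
    (RIter (n - 1)).map (mapRingHom (Int.castRingHom (ZMod 2))) =
        X ^ 4 ^ n * C (((X : (ZMod 2)[X]) + 1) ^ 4 ^ n) ∧
    ((RIter (n - 1)).eval (X : Polynomial ℤ)).map (Int.castRingHom (ZMod 2)) =
        X ^ 4 ^ n * ((X : (ZMod 2)[X]) + 1) ^ 4 ^ n := by
  obtain ⟨k, rfl⟩ : ∃ k, n = k + 1 := ⟨n - 1, (Nat.succ_pred_eq_of_pos hn).symm⟩
  have hk : k + 1 - 1 = k := rfl
  rw [hk]
  obtain ⟨h1, _⟩ := RIter_key k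
  refine ⟨h1, ?_⟩
  have heval : ((RIter k).eval (X : Polynomial ℤ)).map (Int.castRingHom (ZMod 2)) =
      ((RIter k).map (mapRingHom (Int.castRingHom (ZMod 2)))).eval (X : Polynomial (ZMod 2)) := by
    rw [Polynomial.eval_map]
    have h3 := Polynomial.hom_eval₂ (RIter k) (RingHom.id ℤ[X])
      (mapRingHom (Int.castRingHom (ZMod 2))) (X : Polynomial ℤ)
    rw [RingHom.comp_id] at h3
    rw [show (mapRingHom (Int.castRingHom (ZMod 2))) (X : Polynomial ℤ) =
      (X : Polynomial (ZMod 2)) by simp] at h3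
    exact h3
  rw [heval, h1]
  simp [eval_mul, eval_pow, eval_C]
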